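/- arXiv:2302.02889 — 2 statements merged into one kernel-verified Lean document; each statement's English description precedes it below -/
import Mathlib

section
/- The 3×3 matrix re-factorization problem A¹(u)A²(v) = A²(y)A¹(x) is equivalent to the map φ^{1,2}: for x = (x¹,x²,x³), y = (y¹,y²,y³) in D³ with y² + y¹x² ≠ 0, the pair (u,v) = φ^{1,2}(x,y) satisfies A¹(u)A²(v) = A²(y)A¹(x); conversely, if (u,v) with v² ≠ 0 satisfies A¹(u)A²(v) = A²(y)A¹(x), then (u,v) = φ^{1,2}(x,y). -/
variable {D : Type*} [DivisionRing D]

/-- The map `φ^{1,2}`, the `N = 3` extension of the homogeneous normalization map. -/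
def phi12 : (D × D × D) × (D × D × D) → (D × D × D) × (D × D × D) :=
  fun ⟨⟨x1, x2, x3⟩, ⟨y1, y2, y3⟩⟩ =>
    ((x1 - x2 * (y2 + y1 * x2)⁻¹ * (y1 * x1),
      x2 * (y2 + y1 * x2)⁻¹,
      x3 - x2 * (y2 + y1 * x2)⁻¹ * (y3 + y1 * x3)),
     (y1 * x1, y2 + y1 * x2, y3 + y1 * x3))

/-- The matrix `A¹(x)`: the identity with first row replaced by `(x¹, x², x³)`. -/
def A1 (x : D × D × D) : Matrix (Fin 3) (Fin 3) D :=
  !![x.1, x.2.1, x.2.2; 0, 1, 0; 0, 0, 1]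

/-- The matrix `A²(x)`: the identity with second row replaced by `(x¹, x², x³)`. -/
def A2 (x : D × D × D) : Matrix (Fin 3) (Fin 3) D :=
  !![1, 0, 0; x.1, x.2.1, x.2.2; 0, 0, 1]

/-- The `3 × 3` re-factorization problem `A¹(u)A²(v) = A²(y)A¹(x)` is equivalent to the
map `φ^{1,2}`. -/
theorem refactorization_iff_phi12 (x y : D × D × D) :
    (y.2.1 + y.1 * x.2.1 ≠ 0 →
      A1 (phi12 (x, y)).1 * A2 (phi12 (x, y)).2 = A2 y * A1 x) ∧
    (∀ u v : D × D × D, v.2.1 ≠ 0 → A1 u * A2 v = A2 y * A1 x → (u, v) = phi12 (x, y)) := by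
  obtain ⟨x1, x2, x3⟩ := x
  obtain ⟨y1, y2, y3⟩ := y
  constructor
  · intro hne
    simp only [phi12, A1, A2]
    rw [Matrix.mul_fin_three, Matrix.mul_fin_three]
    ext i j
    fin_cases i <;> fin_cases j <;>
      simp [mul_assoc, inv_mul_cancel_right₀ hne, sub_add_cancel, add_comm]
  · rintro ⟨u1, u2, u3⟩ ⟨v1, v2, v3⟩ hv h
    simp only [A1, A2] at h
    rw [Matrix.mul_fin_three, Matrix.mul_fin_three, ← Matrix.ext_iff] at h
    have h00 := h 0 0
    have h01 := h 0 1
    have h02 := h 0 2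
    have h10 := h 1 0
    have h11 := h 1 1
    have h12 := h 1 2
    simp at h00 h01 h02 h10 h11 h12
    subst h10 h11 h12
    have hv' : y1 * x2 + y2 ≠ 0 := by simpa using hv
    have hu2 : u2 = x2 * (y2 + y1 * x2)⁻¹ := by
      rw [add_comm y2]
      calc u2 = u2 * (y1 * x2 + y2) * (y1 * x2 + y2)⁻¹ :=
            (mul_inv_cancel_right₀ hv' u2).symm
        _ = x2 * (y1 * x2 + y2)⁻¹ := by rw [h01]
    simp only [phi12, Prod.mk.injEq]
    refine ⟨⟨?_, hu2, ?_⟩, trivial, add_comm _ _, add_comm _ _⟩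
    · rw [← hu2]; exact eq_sub_of_add_eq h00
    · rw [← hu2, add_comm y3]; exact eq_sub_of_add_eq' h02
end

section
/- The conjugate map φ^{1,3} := (σ₂₃ × σ₂₃) ∘ φ^{1,2} ∘ (σ₂₃ × σ₂₃) solves the 3×3 matrix re-factorization problem with A¹ and A³: for x, y in D³ with y³ + y¹x³ ≠ 0 and (u,v) = φ^{1,3}(x,y), one has A¹(u)A³(v) = A³(y)A¹(x). Explicitly, v¹ = y¹x¹, v² = y² + y¹x², v³ = y³ + y¹x³, u³ = x³(y³ + y¹x³)⁻¹, u¹ = x¹ − x³(y³ + y¹x³)⁻¹y¹x¹, u² = x² − x³(y³ + y¹x³)⁻¹(y² + y¹x²). -/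
variable {D : Type*} [DivisionRing D]

/-- The involution `σ₂₃` interchanging the second and third components. -/
def sigma23 : D × D × D → D × D × D := fun ⟨x1, x2, x3⟩ => (x1, x3, x2)

/-- The conjugate map `φ^{1,3} = (σ₂₃ × σ₂₃) ∘ φ^{1,2} ∘ (σ₂₃ × σ₂₃)`. -/
def phi13 : (D × D × D) × (D × D × D) → (D × D × D) × (D × D × D) :=
  Prod.map sigma23 sigma23 ∘ phi12 ∘ Prod.map sigma23 sigma23

/-- The matrix `A³(x)`: the identity with third row replaced by `(x¹, x², x³)`. -/
def A3 (x : D × D × D) : Matrix (Fin 3) (Fin 3) D :=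
  !![1, 0, 0; 0, 1, 0; x.1, x.2.1, x.2.2]

/-- The conjugate map `φ^{1,3}` solves the re-factorization problem
`A¹(u)A³(v) = A³(y)A¹(x)`, and is given by the stated explicit formulas. -/
theorem phi13_refactorization (x1 x2 x3 y1 y2 y3 : D)
    (h : y3 + y1 * x3 ≠ 0) :
    A1 (phi13 ((x1, x2, x3), (y1, y2, y3))).1 * A3 (phi13 ((x1, x2, x3), (y1, y2, y3))).2 =
      A3 (y1, y2, y3) * A1 (x1, x2, x3) ∧
    phi13 ((x1, x2, x3), (y1, y2, y3)) =
      ((x1 - x3 * (y3 + y1 * x3)⁻¹ * (y1 * x1),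
        x2 - x3 * (y3 + y1 * x3)⁻¹ * (y2 + y1 * x2),
        x3 * (y3 + y1 * x3)⁻¹),
       (y1 * x1, y2 + y1 * x2, y3 + y1 * x3)) := by
  have hmap : phi13 ((x1, x2, x3), (y1, y2, y3)) =
      ((x1 - x3 * (y3 + y1 * x3)⁻¹ * (y1 * x1),
        x2 - x3 * (y3 + y1 * x3)⁻¹ * (y2 + y1 * x2),
        x3 * (y3 + y1 * x3)⁻¹),
       (y1 * x1, y2 + y1 * x2, y3 + y1 * x3)) := by
    simp [phi13, phi12, sigma23, Prod.map]
  refine ⟨?_, hmap⟩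
  rw [hmap]
  ext i j
  fin_cases i <;> fin_cases j <;>
    simp [A1, A3, Matrix.mul_apply, Fin.sum_univ_three, mul_assoc,
      inv_mul_cancel₀ h, add_comm, Matrix.vecHead, Matrix.vecTail]
end
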